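/- (Evaluation at z2 = −z1.) For every k ≥ 2 and every d = (d1, …, dk) ∈ ℤ^k, there exists a Laurent polynomial c ∈ R[z1^{±1}, z3^{±1}, …, zk^{±1}] such that substituting z2 = −z1 into the monomial shuffle element Sh_k(d) yields Sh_k(d)(z1, −z1, z3, …, zk) = (1 + q1)(1 + q2)(1 + q)·c in the field ℂ(q1, q2, z1, z3, …, zk). -/

import Mathlib

open MvPolynomial Finset

noncomputable section

/-- `Fk k` is the field `F_k = ℂ(q1, q2, z1, …, zk)`, realized as the fraction field of the
polynomial ring `ℂ[q1, q2, z1, …, zk]`. -/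
abbrev Fk (k : ℕ) : Type := FractionRing (MvPolynomial (Fin 2 ⊕ Fin k) ℂ)

/-- The indeterminate `q1` in `F_k`. -/
def q1F (k : ℕ) : Fk k := algebraMap (MvPolynomial (Fin 2 ⊕ Fin k) ℂ) (Fk k) (X (Sum.inl 0))

/-- The indeterminate `q2` in `F_k`. -/
def q2F (k : ℕ) : Fk k := algebraMap (MvPolynomial (Fin 2 ⊕ Fin k) ℂ) (Fk k) (X (Sum.inl 1))

/-- The indeterminates `z1, …, zk` in `F_k` (zero-indexed: `zF k i` is `z_{i+1}`). -/
def zF (k : ℕ) (i : Fin k) : Fk k := algebraMap (MvPolynomial (Fin 2 ⊕ Fin k) ℂ) (Fk k) (X (Sum.inr i))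

/-- `ω(x, y) = (x − q·y)(y − q1·x)(y − q2·x)/(x − y)`, where `q = q1·q2`. -/
def omegaF {K : Type*} [Field K] (q1 q2 x y : K) : K :=
  (x - q1 * q2 * y) * (y - q1 * x) * (y - q2 * x) / (x - y)

/-- The monomial shuffle element
`Sh_k(d) = Σ_{σ ∈ S_k} ∏_{i=1}^k z_{σ(i)}^{d_i} · ∏_{1 ≤ i < j ≤ k} ω(z_{σ(i)}, z_{σ(j)})`,
as a rational expression in the values `z : Fin k → K`. -/
def Sh {K : Type*} [Field K] (q1 q2 : K) {k : ℕ} (z : Fin k → K) (d : Fin k → ℤ) : K :=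
  ∑ σ : Equiv.Perm (Fin k), (∏ i, z (σ i) ^ d i) *
    ∏ p ∈ Finset.univ.filter (fun p : Fin k × Fin k => p.1 < p.2),
      omegaF q1 q2 (z (σ p.1)) (z (σ p.2))

/-- The Laurent polynomial subring `R[z1^{±1}, …, zk^{±1}]` of `K`, where
`R = ℂ[q1^{±1}, q2^{±1}]`: the subring generated by the complex constants,
`q1^{±1}`, `q2^{±1}` and the `z_i^{±1}`. -/
def laurentSubring {K : Type*} [Field K] [Algebra ℂ K] (q1 q2 : K) {k : ℕ} (z : Fin k → K) :
    Subring K :=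
  Subring.closure ((Set.range fun c : ℂ => algebraMap ℂ K c) ∪ {q1, q1⁻¹, q2, q2⁻¹} ∪
    Set.range z ∪ Set.range fun i => (z i)⁻¹)

/-- The `ℂ(q1,q2)`-algebra automorphism of `F_k` fixing `q1, q2` and sending `z_i ↦ z_{τ(i)}`. -/
def permAut (k : ℕ) (τ : Equiv.Perm (Fin k)) : Fk k ≃+* Fk k :=
  IsFractionRing.ringEquivOfRingEquiv
    (MvPolynomial.renameEquiv ℂ (Equiv.sumCongr (Equiv.refl (Fin 2)) τ)).toRingEquiv

set_option maxHeartbeats 1000000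
set_option synthInstance.maxHeartbeats 1000000

namespace ShAux

variable (m : ℕ)

abbrev A (m : ℕ) := MvPolynomial (Fin 2 ⊕ Fin (m+2)) ℂ

def Q1 : A m := X (Sum.inl 0)
def Q2 : A m := X (Sum.inl 1)
def Z (i : Fin (m+2)) : A m := X (Sum.inr i)
def W (i : Fin (m+2)) : A m := if i = 1 then -Z m 0 else Z m i
def Np (x y : A m) : A m := (x - Q1 m * Q2 m * y) * (y - Q1 m * x) * (y - Q2 m * x)
def U : A m := (1 + Q1 m) * (1 + Q2 m) * (1 + Q1 m * Q2 m)
def pairs : Finset (Fin (m+2) × Fin (m+2)) := univ.filter fun p => p.1 < p.2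
def tv (p : Fin (m+2) × Fin (m+2)) : Fin (m+2) := if p.2 = 1 then 0 else p.2
def tval (p : Fin (m+2) × Fin (m+2)) : A m := if p.2 = 1 then 0 else W m p.1
def g (p : Fin (m+2) × Fin (m+2)) : Fin 2 ⊕ Fin (m+2) → A m :=
  Sum.elim (fun t => X (Sum.inl t))
    (fun v => if v = tv m p then tval m p else X (Sum.inr v))
def L' (p : Fin (m+2) × Fin (m+2)) : A m := X (Sum.inr (tv m p)) - tval m p
def sgn (σ : Equiv.Perm (Fin (m+2))) : A m := ((Equiv.Perm.sign σ : ℤ) : A m)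
def B (e : Fin (m+2) → ℕ) (σ : Equiv.Perm (Fin (m+2))) : A m :=
  (∏ i, W m (σ i) ^ e i) * ∏ p ∈ pairs m, Np m (W m (σ p.1)) (W m (σ p.2))
def P (e : Fin (m+2) → ℕ) : A m := ∑ σ : Equiv.Perm (Fin (m+2)), sgn m σ * B m e σ

-- basic index facts
lemma pairs_mem {p : Fin (m+2) × Fin (m+2)} : p ∈ pairs m ↔ p.1 < p.2 := by
  simp [pairs]

lemma snd_eq_one {p : Fin (m+2) × Fin (m+2)} (hp : p ∈ pairs m) (h : p.2 = 1) : p.1 = 0 := by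
  rw [pairs_mem] at hp
  have := h ▸ hp
  have h1 : (p.1 : ℕ) < ((1 : Fin (m+2)) : ℕ) := this
  have e1 : ((1 : Fin (m+2)) : ℕ) = 1 := rfl
  have e0 : ((0 : Fin (m+2)) : ℕ) = 0 := rfl
  exact Fin.ext (by omega)

lemma snd_ne_zero {p : Fin (m+2) × Fin (m+2)} (hp : p ∈ pairs m) : p.2 ≠ 0 := by
  rw [pairs_mem] at hp
  intro h
  rw [h] at hp
  exact absurd hp (by
    intro hlt
    have e0 : ((0 : Fin (m+2)) : ℕ) = 0 := rfl
    have := Fin.lt_def.mp hlt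
    omega)

-- the general difference-divisibility lemma
lemma key_dvd {σR : Type*} {R : Type*} [CommRing R] (gg : σR → MvPolynomial σR R)
    (s : σR) (h : ∀ v, v ≠ s → gg v = X v) (Rp : MvPolynomial σR R) :
    (X s - gg s) ∣ (Rp - aeval gg Rp) := by
  induction Rp using MvPolynomial.induction_on with
  | C a => simp
  | add p q hp hq =>
      have : p + q - aeval gg (p + q) = (p - aeval gg p) + (q - aeval gg q) := by
        rw [map_add]; ring
      rw [this]; exact dvd_add hp hq
  | mul_X p v hp =>
      have hX : p * X v - aeval gg (p * X v) =
          (p - aeval gg p) * X v + aeval gg p * (X v - gg v) := by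
        rw [map_mul, aeval_X]; ring
      rw [hX]
      refine dvd_add (hp.mul_right _) ?_
      by_cases hv : v = s
      · subst hv; exact (dvd_refl _).mul_left _
      · rw [h v hv]; simp

lemma dvd_of_aeval_eq_zero (p : Fin (m+2) × Fin (m+2)) (R : A m)
    (h : aeval (g m p) R = 0) : L' m p ∣ R := by
  have hg : ∀ v, v ≠ Sum.inr (tv m p) → g m p v = X v := by
    rintro (t | v) hv
    · rfl
    · simp only [g, Sum.elim_inr]
      rw [if_neg]; intro hv'; exact hv (by rw [hv'])
  have := key_dvd (g m p) (Sum.inr (tv m p)) hg R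
  rw [h, sub_zero] at this
  have hgs : g m p (Sum.inr (tv m p)) = tval m p := by simp [g]
  rwa [hgs] at this

-- φ_p collapses W at the pair p
lemma aeval_g_W_fst_eq_snd {p : Fin (m+2) × Fin (m+2)} (hp : p ∈ pairs m) :
    aeval (g m p) (W m p.1) = aeval (g m p) (W m p.2) := by
  by_cases h2 : p.2 = 1
  · have h1 : p.1 = 0 := snd_eq_one m hp h2
    have htv : tv m p = 0 := by simp [tv, h2]
    have htval : tval m p = 0 := by simp [tval, h2]
    rw [h1, h2]
    have hW0 : W m 0 = Z m 0 := by
      rw [W, if_neg]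
      intro h; exact absurd h.symm (by
        intro hh
        have : ((1 : Fin (m+2)) : ℕ) = ((0 : Fin (m+2)) : ℕ) := by rw [hh]
        simp at this)
    have hW1 : W m 1 = -Z m 0 := by rw [W, if_pos rfl]
    rw [hW0, hW1, map_neg]
    simp [Z, g, htv, htval]
  · have htv : tv m p = p.2 := by simp [tv, h2]
    have htval : tval m p = W m p.1 := by simp [tval, h2]
    have hlt : p.1 < p.2 := (pairs_mem m).mp hp
    have hne12 : p.1 ≠ p.2 := ne_of_lt hlt
    have hWp2 : W m p.2 = Z m p.2 := by rw [W, if_neg h2]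
    have hrhs : aeval (g m p) (W m p.2) = W m p.1 := by
      rw [hWp2, Z, aeval_X]
      simp [g, htv, htval]
    rw [hrhs]
    -- lhs: W p.1 is a (±) variable different from the substituted one
    have hp20 : p.2 ≠ 0 := snd_ne_zero m hp
    by_cases h11 : p.1 = 1
    · rw [W, if_pos h11, Z, map_neg, aeval_X]
      have : (0 : Fin (m+2)) ≠ tv m p := by rw [htv]; exact fun h => hp20 h.symm
      simp [g, this, W, if_pos h11, Z]
    · rw [W, if_neg h11, Z, aeval_X]
      have : p.1 ≠ tv m p := by rw [htv]; exact hne12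
      simp [g, this, W, if_neg h11, Z]

lemma aeval_g_W_swap {p : Fin (m+2) × Fin (m+2)} (hp : p ∈ pairs m)
    (l : Fin (m+2)) :
    aeval (g m p) (W m (Equiv.swap p.1 p.2 l)) = aeval (g m p) (W m l) := by
  rcases eq_or_ne l p.1 with rfl | h1
  · rw [Equiv.swap_apply_left]; exact (aeval_g_W_fst_eq_snd m hp).symm
  rcases eq_or_ne l p.2 with rfl | h2
  · rw [Equiv.swap_apply_right]; exact aeval_g_W_fst_eq_snd m hp
  · rw [Equiv.swap_apply_of_ne_of_ne h1 h2]

lemma aeval_g_Q1 (p : Fin (m+2) × Fin (m+2)) : aeval (g m p) (Q1 m) = Q1 m := by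
  simp [Q1, g]

lemma aeval_g_Q2 (p : Fin (m+2) × Fin (m+2)) : aeval (g m p) (Q2 m) = Q2 m := by
  simp [Q2, g]

lemma aeval_g_B (e : Fin (m+2) → ℕ) {p : Fin (m+2) × Fin (m+2)} (hp : p ∈ pairs m)
    (σ : Equiv.Perm (Fin (m+2))) :
    aeval (g m p) (B m e (Equiv.swap p.1 p.2 * σ)) = aeval (g m p) (B m e σ) := by
  simp only [B, map_mul, map_prod, map_pow, Np, map_sub, aeval_g_Q1, aeval_g_Q2,
    Equiv.Perm.mul_apply, aeval_g_W_swap m hp]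

lemma aeval_g_P (e : Fin (m+2) → ℕ) {p : Fin (m+2) × Fin (m+2)} (hp : p ∈ pairs m) :
    aeval (g m p) (P m e) = 0 := by
  have hlt : p.1 < p.2 := (pairs_mem m).mp hp
  have hne : p.1 ≠ p.2 := ne_of_lt hlt
  set τ := Equiv.swap p.1 p.2 with hτ
  have h1 : aeval (g m p) (P m e) =
      ∑ σ : Equiv.Perm (Fin (m+2)), sgn m σ * aeval (g m p) (B m e σ) := by
    rw [P, map_sum]
    refine Finset.sum_congr rfl fun σ _ => ?_
    rw [map_mul]
    congr 1
    exact map_intCast (aeval (g m p)) _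
  have h2 : ∀ σ : Equiv.Perm (Fin (m+2)), sgn m (τ * σ) = - sgn m σ := by
    intro σ
    simp [sgn, hτ, Equiv.Perm.sign_mul, Equiv.Perm.sign_swap hne]
  have h3 : (∑ σ : Equiv.Perm (Fin (m+2)), sgn m σ * aeval (g m p) (B m e σ)) =
      ∑ σ : Equiv.Perm (Fin (m+2)), sgn m (τ * σ) * aeval (g m p) (B m e (τ * σ)) := by
    exact (Equiv.sum_comp (Equiv.mulLeft τ)
      (fun σ => sgn m σ * aeval (g m p) (B m e σ))).symm
  have h4 : aeval (g m p) (P m e) = - aeval (g m p) (P m e) := by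
    rw [h1]
    nth_rewrite 1 [h3]
    rw [← Finset.sum_neg_distrib]
    refine Finset.sum_congr rfl fun σ _ => ?_
    rw [h2, aeval_g_B m e hp]
    ring
  have h5 : (2 : A m) * aeval (g m p) (P m e) = 0 := by
    linear_combination h4
  rcases mul_eq_zero.mp h5 with h | h
  · exact absurd h two_ne_zero
  · exact h

lemma zero_ne_one_fin : (0 : Fin (m+2)) ≠ 1 := by
  intro h
  have : ((0 : Fin (m+2)) : ℕ) = ((1 : Fin (m+2)) : ℕ) := congrArg Fin.val h
  simp at this

lemma hW0 : W m 0 = Z m 0 := by rw [W, if_neg (zero_ne_one_fin m)]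
lemma hW1 : W m 1 = -Z m 0 := by rw [W, if_pos rfl]

lemma U_dvd_B (e : Fin (m+2) → ℕ) (σ : Equiv.Perm (Fin (m+2))) : U m ∣ B m e σ := by
  classical
  set a := σ⁻¹ 0 with ha
  set b := σ⁻¹ 1 with hb
  have hab : a ≠ b := by
    intro h
    apply zero_ne_one_fin m
    have := congrArg σ h
    rwa [ha, hb, Equiv.Perm.coe_inv, Equiv.apply_symm_apply, Equiv.apply_symm_apply] at this
  set p₀ : Fin (m+2) × Fin (m+2) := if a < b then (a, b) else (b, a) with hp₀
  have hmem : p₀ ∈ pairs m := by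
    rw [pairs_mem]
    rcases lt_or_gt_of_ne hab with h | h
    · rw [hp₀, if_pos h]; exact h
    · rw [hp₀, if_neg (not_lt.mpr (le_of_lt h))]; exact h
  have hσa : σ a = 0 := Equiv.apply_symm_apply σ 0
  have hσb : σ b = 1 := Equiv.apply_symm_apply σ 1
  have hfac : ∃ Cst : A m, Np m (W m (σ p₀.1)) (W m (σ p₀.2)) = U m * Cst := by
    by_cases h : a < b
    · refine ⟨(Z m 0)^3, ?_⟩
      rw [hp₀, if_pos h]
      simp only [hσa, hσb, hW0, hW1, Np, U]
      ring
    · refine ⟨-(Z m 0)^3, ?_⟩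
      rw [hp₀, if_neg h]
      simp only [hσa, hσb, hW0, hW1, Np, U]
      ring
  obtain ⟨Cst, hfac⟩ := hfac
  rw [B, ← Finset.mul_prod_erase _ _ hmem, hfac]
  exact ⟨(∏ i, W m (σ i) ^ e i) *
    (Cst * ∏ p ∈ (pairs m).erase p₀, Np m (W m (σ p.1)) (W m (σ p.2))), by ring⟩

lemma U_dvd_P (e : Fin (m+2) → ℕ) : U m ∣ P m e := by
  refine Finset.dvd_sum fun σ _ => ?_
  exact (U_dvd_B m e σ).mul_left _

lemma aeval_g_U (p : Fin (m+2) × Fin (m+2)) : aeval (g m p) (U m) = U m := by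
  simp only [U, map_mul, map_add, map_one, aeval_g_Q1, aeval_g_Q2]

lemma U_ne_zero : U m ≠ 0 := by
  intro h
  have := congrArg (eval (fun _ => (0 : ℂ))) h
  simp [U, Q1, Q2] at this

def cval (l : Fin (m+2)) : ℂ := ((l : ℕ) : ℂ) + 1
def vv : Fin 2 ⊕ Fin (m+2) → ℂ := Sum.elim (fun _ => 0) (cval m)
def ec (q : Fin (m+2) × Fin (m+2)) (u : Fin (m+2)) : ℂ :=
  if u = tv m q then
    (if q.2 = 1 then 0 else (if q.1 = 1 then -(cval m 0) else cval m q.1))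
  else cval m u

lemma cval_ne_zero (l : Fin (m+2)) : cval m l ≠ 0 := by
  rw [cval]
  intro h
  have : (((l : ℕ) + 1 : ℕ) : ℂ) = 0 := by push_cast; linear_combination h
  rw [Nat.cast_eq_zero] at this
  omega

lemma cval_add_ne_zero (l l' : Fin (m+2)) : cval m l + cval m l' ≠ 0 := by
  rw [cval, cval]
  intro h
  have : (((l : ℕ) + (l' : ℕ) + 2 : ℕ) : ℂ) = 0 := by push_cast; linear_combination h
  rw [Nat.cast_eq_zero] at this
  omega

lemma cval_inj {u w : Fin (m+2)} (h : cval m u = cval m w) : u = w := by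
  rw [cval, cval] at h
  have : ((u : ℕ) : ℂ) = ((w : ℕ) : ℂ) := by linear_combination h
  exact Fin.ext (Nat.cast_injective this)

lemma cval_sub_ne_zero {u w : Fin (m+2)} (h : u ≠ w) : cval m u - cval m w ≠ 0 := by
  intro hc
  exact h (cval_inj m (by linear_combination hc))

lemma eval_vv_Z (l : Fin (m+2)) : eval (vv m) (Z m l) = cval m l := by
  simp [Z, vv]

lemma eval_vv_W (l : Fin (m+2)) :
    eval (vv m) (W m l) = if l = 1 then -(cval m 0) else cval m l := by
  by_cases h : l = 1
  · rw [W, if_pos h, if_pos h, map_neg, eval_vv_Z]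
  · rw [W, if_neg h, if_neg h, eval_vv_Z]

lemma eval_aeval_g_X (q : Fin (m+2) × Fin (m+2)) (u : Fin (m+2)) :
    eval (vv m) (aeval (g m q) (X (Sum.inr u) : A m)) = ec m q u := by
  rw [aeval_X, ec]
  by_cases h : u = tv m q
  · rw [g, Sum.elim_inr, if_pos h, if_pos h, tval]
    by_cases h2 : q.2 = 1
    · rw [if_pos h2, if_pos h2, map_zero]
    · rw [if_neg h2, if_neg h2, eval_vv_W]
  · rw [g, Sum.elim_inr, if_neg h, if_neg h]
    simp [vv]

lemma eval_aeval_g_L' (q p : Fin (m+2) × Fin (m+2)) :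
    eval (vv m) (aeval (g m q) (L' m p)) =
      ec m q (tv m p) -
        (if p.2 = 1 then 0 else (if p.1 = 1 then -(ec m q 0) else ec m q p.1)) := by
  rw [L', map_sub, map_sub, eval_aeval_g_X, tval]
  congr 1
  by_cases h2 : p.2 = 1
  · rw [if_pos h2, if_pos h2, map_zero, map_zero]
  · rw [if_neg h2, if_neg h2, W]
    by_cases h1 : p.1 = 1
    · rw [if_pos h1, if_pos h1, Z, map_neg, map_neg, eval_aeval_g_X]
    · rw [if_neg h1, if_neg h1, Z, eval_aeval_g_X]

lemma fst_ne_one_of_lt {p : Fin (m+2) × Fin (m+2)} (hp : p ∈ pairs m) (h2 : p.2 = 1) :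
    p.1 ≠ 1 := by
  rw [snd_eq_one m hp h2]
  exact zero_ne_one_fin m

lemma NV {p q : Fin (m+2) × Fin (m+2)} (hp : p ∈ pairs m) (hq : q ∈ pairs m)
    (hne : p ≠ q) : aeval (g m q) (L' m p) ≠ 0 := by
  intro h0
  have hD := eval_aeval_g_L' m q p
  rw [h0, map_zero] at hD
  -- show the explicit complex number is nonzero
  apply absurd hD.symm
  have hpl : p.1 < p.2 := (pairs_mem m).mp hp
  have hql : q.1 < q.2 := (pairs_mem m).mp hq
  have hp20 : p.2 ≠ 0 := snd_ne_zero m hp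
  have hq20 : q.2 ≠ 0 := snd_ne_zero m hq
  by_cases hq2 : q.2 = 1
  · -- q = (0,1), tv q = 0, collapse value 0
    have hq1 : q.1 = 0 := snd_eq_one m hq hq2
    have htvq : tv m q = 0 := by rw [tv, if_pos hq2]
    have hec : ∀ u, ec m q u = if u = 0 then 0 else cval m u := by
      intro u; rw [ec, htvq, if_pos hq2]
    by_cases hp2 : p.2 = 1
    · exact absurd (Prod.ext ((snd_eq_one m hp hp2).trans hq1.symm) (hp2.trans hq2.symm)) hne
    · have htvp : tv m p = p.2 := by rw [tv, if_neg hp2]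
      have he2 : ec m q (tv m p) = cval m p.2 := by rw [htvp, hec, if_neg hp20]
      have he0 : ec m q 0 = 0 := by rw [hec, if_pos rfl]
      rw [he2, if_neg hp2]
      by_cases hp1 : p.1 = 1
      · rw [if_pos hp1, he0, neg_zero, sub_zero]
        exact cval_ne_zero m p.2
      · rw [if_neg hp1, hec p.1]
        by_cases hp10 : p.1 = 0
        · rw [if_pos hp10, sub_zero]
          exact cval_ne_zero m p.2
        · rw [if_neg hp10]
          exact cval_sub_ne_zero m (ne_of_gt hpl)
  · -- tv q = q.2
    have htvq : tv m q = q.2 := by rw [tv, if_neg hq2]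
    have hec : ∀ u, ec m q u =
        if u = q.2 then (if q.1 = 1 then -(cval m 0) else cval m q.1) else cval m u := by
      intro u; rw [ec, htvq, if_neg hq2]
    have hec0 : ec m q 0 = cval m 0 := by
      rw [hec, if_neg (fun h => hq20 h.symm)]
    by_cases hp2 : p.2 = 1
    · have htvp : tv m p = 0 := by rw [tv, if_pos hp2]
      rw [htvp, if_pos hp2, hec0, sub_zero]
      exact cval_ne_zero m 0
    · have htvp : tv m p = p.2 := by rw [tv, if_neg hp2]
      rw [htvp, if_neg hp2]
      by_cases hpq2 : p.2 = q.2
      · have he2 : ec m q p.2 = (if q.1 = 1 then -(cval m 0) else cval m q.1) := by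
          rw [hec, if_pos hpq2]
        by_cases hp1 : p.1 = 1
        · have hq1 : q.1 ≠ 1 := fun hq1 => hne (Prod.ext (hp1.trans hq1.symm) hpq2)
          rw [he2, if_neg hq1, if_pos hp1, hec0, sub_neg_eq_add]
          exact cval_add_ne_zero m q.1 0
        · have hp1q2 : p.1 ≠ q.2 := fun h => absurd (hpq2 ▸ hpl) (h ▸ lt_irrefl p.1)
          have he1 : ec m q p.1 = cval m p.1 := by rw [hec, if_neg hp1q2]
          rw [he2, if_neg hp1, he1]
          by_cases hq1 : q.1 = 1
          · rw [if_pos hq1]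
            intro hc
            exact cval_add_ne_zero m 0 p.1 (by linear_combination -hc)
          · rw [if_neg hq1]
            refine cval_sub_ne_zero m ?_
            intro h
            exact hne (Prod.ext h.symm hpq2)
      · have he2 : ec m q p.2 = cval m p.2 := by rw [hec, if_neg hpq2]
        rw [he2]
        by_cases hp1 : p.1 = 1
        · rw [if_pos hp1, hec0, sub_neg_eq_add]
          exact cval_add_ne_zero m p.2 0
        · rw [if_neg hp1, hec p.1]
          by_cases hp1q2 : p.1 = q.2
          · rw [if_pos hp1q2]
            by_cases hq1 : q.1 = 1
            · rw [if_pos hq1, sub_neg_eq_add]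
              exact cval_add_ne_zero m p.2 0
            · rw [if_neg hq1]
              refine cval_sub_ne_zero m ?_
              intro h
              have hlt : q.1 < p.2 := lt_trans (hp1q2 ▸ hql) hpl
              rw [h] at hlt
              exact lt_irrefl _ hlt
          · rw [if_neg hp1q2]
            exact cval_sub_ne_zero m (ne_of_gt hpl)

lemma prod_L'_dvd (s : Finset (Fin (m+2) × Fin (m+2))) (hs : s ⊆ pairs m) (R : A m)
    (h : ∀ p ∈ s, aeval (g m p) R = 0) : (∏ p ∈ s, L' m p) ∣ R := by
  classical
  induction s using Finset.induction_on generalizing R with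
  | empty => simpa using one_dvd R
  | insert p s' hnotmem ih =>
      have hp : p ∈ pairs m := hs (Finset.mem_insert_self p s')
      have hs' : s' ⊆ pairs m := fun x hx => hs (Finset.mem_insert_of_mem hx)
      have h1 : L' m p ∣ R := dvd_of_aeval_eq_zero m p R (h p (Finset.mem_insert_self p s'))
      obtain ⟨R', hR'⟩ := h1
      have h2 : ∀ q ∈ s', aeval (g m q) R' = 0 := by
        intro q hq
        have hq' : q ∈ pairs m := hs' hq
        have h0 : aeval (g m q) R = 0 := h q (Finset.mem_insert_of_mem hq)
        rw [hR', map_mul] at h0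
        rcases mul_eq_zero.mp h0 with hc | hc
        · exact absurd hc (NV m hp hq' (by rintro rfl; exact hnotmem hq))
        · exact hc
      rw [Finset.prod_insert hnotmem, hR']
      exact mul_dvd_mul_left (L' m p) (ih hs' R' h2)

def Vprod : A m := ∏ p ∈ pairs m, L' m p

lemma exists_Q (e : Fin (m+2) → ℕ) : ∃ Qq : A m, P m e = U m * Vprod m * Qq := by
  obtain ⟨P₁, hP₁⟩ := U_dvd_P m e
  have hphi : ∀ p ∈ pairs m, aeval (g m p) P₁ = 0 := by
    intro p hp
    have h0 : aeval (g m p) (P m e) = 0 := aeval_g_P m e hp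
    rw [hP₁, map_mul, aeval_g_U] at h0
    rcases mul_eq_zero.mp h0 with hc | hc
    · exact absurd hc (U_ne_zero m)
    · exact hc
  obtain ⟨Qq, hQq⟩ := prod_L'_dvd m (pairs m) (le_refl _) P₁ hphi
  exact ⟨Qq, by rw [hP₁, hQq, Vprod, mul_assoc]⟩

lemma L'_ne_zero {p : Fin (m+2) × Fin (m+2)} (hp : p ∈ pairs m) : L' m p ≠ 0 := by
  intro h0
  have := congrArg (eval (vv m)) h0
  rw [map_zero] at this
  -- eval (vv m) (L' m p) : compute
  rw [L'] at this
  rw [map_sub] at this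
  have hx : eval (vv m) (X (Sum.inr (tv m p)) : A m) = cval m (tv m p) := by simp [vv]
  rw [hx, tval] at this
  by_cases h2 : p.2 = 1
  · rw [if_pos h2, map_zero, sub_zero] at this
    exact cval_ne_zero m _ this
  · rw [if_neg h2, eval_vv_W] at this
    have htvp : tv m p = p.2 := by rw [tv, if_neg h2]
    rw [htvp] at this
    by_cases h1 : p.1 = 1
    · rw [if_pos h1, sub_neg_eq_add] at this
      exact cval_add_ne_zero m p.2 0 this
    · rw [if_neg h1] at this
      exact cval_sub_ne_zero m (ne_of_gt ((pairs_mem m).mp hp)) this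

lemma Vprod_ne_zero : Vprod m ≠ 0 := by
  rw [Vprod]
  exact Finset.prod_ne_zero_iff.mpr fun p hp => L'_ne_zero m hp

def gpsi : Fin 2 ⊕ Fin (m+2) → A m :=
  Sum.elim (fun t => X (Sum.inl t))
    (fun v => if v = 1 then 0 else X (Sum.inr v))

lemma psi_W (l : Fin (m+2)) : aeval (gpsi m) (W m l) = W m l := by
  by_cases h : l = 1
  · rw [W, if_pos h, Z, map_neg, aeval_X]
    simp [gpsi, zero_ne_one_fin m, W, if_pos h, Z]
  · rw [W, if_neg h, Z, aeval_X]
    simp [gpsi, h, W, if_neg h, Z]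

lemma psi_Q1 : aeval (gpsi m) (Q1 m) = Q1 m := by simp [Q1, gpsi]
lemma psi_Q2 : aeval (gpsi m) (Q2 m) = Q2 m := by simp [Q2, gpsi]

lemma psi_U : aeval (gpsi m) (U m) = U m := by
  simp only [U, map_mul, map_add, map_one, psi_Q1, psi_Q2]

lemma psi_L' {p : Fin (m+2) × Fin (m+2)} (hp : p ∈ pairs m) :
    aeval (gpsi m) (L' m p) = L' m p := by
  have htv : tv m p ≠ 1 := by
    rw [tv]
    by_cases h2 : p.2 = 1
    · rw [if_pos h2]; exact zero_ne_one_fin m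
    · rw [if_neg h2]; exact h2
  rw [L', map_sub, aeval_X]
  congr 1
  · simp [gpsi, htv]
  · rw [tval]
    by_cases h2 : p.2 = 1
    · rw [if_pos h2]; exact map_zero _
    · rw [if_neg h2]; exact psi_W m p.1

lemma psi_Vprod : aeval (gpsi m) (Vprod m) = Vprod m := by
  rw [Vprod, map_prod]
  exact Finset.prod_congr rfl fun p hp => psi_L' m hp

lemma psi_P (e : Fin (m+2) → ℕ) : aeval (gpsi m) (P m e) = P m e := by
  rw [P, map_sum]
  refine Finset.sum_congr rfl fun σ _ => ?_
  rw [map_mul]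
  congr 1
  · exact map_intCast (aeval (gpsi m)) _
  · simp only [B, map_mul, map_prod, map_pow, Np, map_sub, psi_Q1, psi_Q2, psi_W]

-- product over pairs vs double product
lemma prod_pairs_eq {M : Type*} [CommMonoid M] {n : ℕ} (f : Fin n × Fin n → M) :
    ∏ p ∈ univ.filter (fun p : Fin n × Fin n => p.1 < p.2), f p
      = ∏ i, ∏ j ∈ Ioi i, f (i, j) := by
  rw [Finset.prod_sigma']
  refine Finset.prod_bij' (fun p _ => ⟨p.1, p.2⟩) (fun x _ => (x.1, x.2))
    (fun p hp => ?_) (fun x hx => ?_) (fun p hp => rfl) (fun x hx => rfl) (fun p hp => rfl)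
  · simp only [Finset.mem_filter, Finset.mem_univ, true_and] at hp
    simp [Finset.mem_sigma, Finset.mem_Ioi, hp]
  · simp only [Finset.mem_sigma, Finset.mem_univ, Finset.mem_Ioi, true_and] at hx
    simp [hx]

lemma vdm_perm {R : Type*} [CommRing R] {n : ℕ} (f : Fin n → R) (σ : Equiv.Perm (Fin n)) :
    ∏ i, ∏ j ∈ Ioi i, (f (σ j) - f (σ i))
      = ((Equiv.Perm.sign σ : ℤ) : R) * ∏ i, ∏ j ∈ Ioi i, (f j - f i) := by
  have h1 : Matrix.vandermonde (fun i => f (σ i)) = (Matrix.vandermonde f).submatrix σ id := by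
    ext i j
    simp [Matrix.vandermonde, Matrix.submatrix]
  have h2 := Matrix.det_permute σ (Matrix.vandermonde f)
  rw [← Matrix.det_vandermonde, ← Matrix.det_vandermonde f, h1, h2]

def vdmW : A m := ∏ i, ∏ j ∈ Ioi i, (W m j - W m i)

lemma pair01_mem : ((0,1) : Fin (m+2) × Fin (m+2)) ∈ pairs m := by
  rw [pairs_mem]
  show (0 : Fin (m+2)) < 1
  rw [Fin.lt_def]
  have e1 : ((1 : Fin (m+2)) : ℕ) = 1 := rfl
  have e0 : ((0 : Fin (m+2)) : ℕ) = 0 := rfl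
  omega

lemma vdmW_eq : vdmW m = (-2 : A m) * Vprod m := by
  have h1 : vdmW m = ∏ p ∈ pairs m, (W m p.2 - W m p.1) := by
    rw [vdmW, pairs, ← prod_pairs_eq (fun p => W m p.2 - W m p.1)]
  have h2 : ∀ p ∈ pairs m,
      W m p.2 - W m p.1 = (if p = ((0,1) : Fin (m+2) × Fin (m+2)) then (-2 : A m) else 1) * L' m p := by
    intro p hp
    by_cases h : p = ((0,1) : Fin (m+2) × Fin (m+2))
    · rw [if_pos h, h]
      have htv : tv m ((0,1) : Fin (m+2) × Fin (m+2)) = 0 := by rw [tv]; simp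
      have htval : tval m ((0,1) : Fin (m+2) × Fin (m+2)) = 0 := by rw [tval]; simp
      rw [L', htv, htval, sub_zero, hW0, hW1]
      simp [Z]
      ring
    · rw [if_neg h, one_mul]
      have h2 : p.2 ≠ 1 := by
        intro h2
        exact h (Prod.ext (snd_eq_one m hp h2) h2)
      have htv : tv m p = p.2 := by rw [tv, if_neg h2]
      have htval : tval m p = W m p.1 := by rw [tval, if_neg h2]
      rw [L', htv, htval, W, if_neg h2, Z]
  rw [h1, Finset.prod_congr rfl h2, Finset.prod_mul_distrib]
  rw [Vprod]
  congr 1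
  rw [Finset.prod_ite_eq' (pairs m) ((0,1) : Fin (m+2) × Fin (m+2)) (fun _ => (-2 : A m))]
  rw [if_pos (pair01_mem m)]

def ιF : A m →+* Fk (m+2) := algebraMap (A m) (Fk (m+2))

lemma ι_inj : Function.Injective (ιF m) := IsFractionRing.injective (A m) (Fk (m+2))

def wF (i : Fin (m+2)) : Fk (m+2) := if i = 1 then -(zF (m+2) 0) else zF (m+2) i

lemma wF_eq (i : Fin (m+2)) : wF m i = ιF m (W m i) := by
  by_cases h : i = 1
  · rw [wF, if_pos h, W, if_pos h, Z, map_neg]; rfl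
  · rw [wF, if_neg h, W, if_neg h, Z]; rfl

lemma W_ne_zero (i : Fin (m+2)) : W m i ≠ 0 := by
  rw [W]
  by_cases h : i = 1
  · rw [if_pos h, Z]; exact neg_ne_zero.mpr (X_ne_zero _)
  · rw [if_neg h, Z]; exact X_ne_zero _

lemma wF_ne_zero (i : Fin (m+2)) : wF m i ≠ 0 := by
  rw [wF_eq]; exact (map_ne_zero_iff _ (ι_inj m)).mpr (W_ne_zero m i)

lemma hq1F : q1F (m+2) = ιF m (Q1 m) := rfl
lemma hq2F : q2F (m+2) = ιF m (Q2 m) := rfl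

def gens : Set (Fk (m+2)) :=
  ((Set.range fun cc : ℂ => algebraMap ℂ (Fk (m + 2)) cc) ∪
    {q1F (m + 2), (q1F (m + 2))⁻¹, q2F (m + 2), (q2F (m + 2))⁻¹} ∪
    (Set.range fun i : {i : Fin (m + 2) // i ≠ 1} => zF (m + 2) i.1) ∪
    (Set.range fun i : {i : Fin (m + 2) // i ≠ 1} => (zF (m + 2) i.1)⁻¹))

lemma mem_const (a : ℂ) : algebraMap ℂ (Fk (m+2)) a ∈ Subring.closure (gens m) :=
  Subring.subset_closure (Set.mem_union_left _ (Set.mem_union_left _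
    (Set.mem_union_left _ ⟨a, rfl⟩)))

lemma mem_q1 : q1F (m+2) ∈ Subring.closure (gens m) :=
  Subring.subset_closure (Set.mem_union_left _ (Set.mem_union_left _
    (Set.mem_union_right _ (Set.mem_insert _ _))))

lemma mem_q2 : q2F (m+2) ∈ Subring.closure (gens m) :=
  Subring.subset_closure (Set.mem_union_left _ (Set.mem_union_left _
    (Set.mem_union_right _ (Set.mem_insert_iff.mpr (Or.inr
      (Set.mem_insert_iff.mpr (Or.inr (Set.mem_insert _ _))))))))

lemma mem_z {i : Fin (m+2)} (hi : i ≠ 1) : zF (m+2) i ∈ Subring.closure (gens m) :=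
  Subring.subset_closure (Set.mem_union_left _
    (Set.mem_union_right _ ⟨⟨i, hi⟩, rfl⟩))

lemma mem_zinv {i : Fin (m+2)} (hi : i ≠ 1) : (zF (m+2) i)⁻¹ ∈ Subring.closure (gens m) :=
  Subring.subset_closure (Set.mem_union_right _ ⟨⟨i, hi⟩, rfl⟩)

lemma mem_psi (R : A m) : ιF m (aeval (gpsi m) R) ∈ Subring.closure (gens m) := by
  induction R using MvPolynomial.induction_on with
  | C a =>
      rw [aeval_C]
      show algebraMap (A m) (Fk (m+2)) ((algebraMap ℂ (A m)) a) ∈ _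
      rw [← IsScalarTower.algebraMap_apply ℂ (A m) (Fk (m+2)) a]
      exact mem_const m a
  | add p q hp hq =>
      rw [map_add, map_add]
      exact Subring.add_mem _ hp hq
  | mul_X p v hp =>
      rw [map_mul, map_mul]
      refine Subring.mul_mem _ hp ?_
      rw [aeval_X]
      rcases v with t | v
      · rw [gpsi, Sum.elim_inl]
        fin_cases t
        · exact mem_q1 m
        · exact mem_q2 m
      · rw [gpsi, Sum.elim_inr]
        by_cases hv : v = 1
        · rw [if_pos hv, map_zero]
          exact Subring.zero_mem _
        · rw [if_neg hv]
          exact mem_z m hv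

lemma main (d : Fin (m+2) → ℤ) :
    ∃ c : Fk (m + 2),
      c ∈ Subring.closure (gens m) ∧
      Sh (q1F (m + 2)) (q2F (m + 2)) (wF m) d
        = (1 + q1F (m + 2)) * (1 + q2F (m + 2)) *
            (1 + q1F (m + 2) * q2F (m + 2)) * c := by
  classical
  set M : ℕ := Finset.univ.sup (fun i => (-(d i)).toNat) with hMdef
  have hdM : ∀ i, 0 ≤ d i + (M:ℤ) := by
    intro i
    have h2 : (-(d i)).toNat ≤ M :=
      Finset.le_sup (f := fun i => (-(d i)).toNat) (Finset.mem_univ i)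
    omega
  set e : Fin (m+2) → ℕ := fun i => (d i + M).toNat with hedef
  have he : ∀ i, ((e i : ℤ)) = d i + M := fun i => Int.toNat_of_nonneg (hdM i)
  obtain ⟨Qq, hQq⟩ := exists_Q m e
  have hUV : U m * Vprod m ≠ 0 := mul_ne_zero (U_ne_zero m) (Vprod_ne_zero m)
  have hQψ : Qq = aeval (gpsi m) Qq := by
    have h1 := psi_P m e
    rw [hQq, map_mul, map_mul, psi_U, psi_Vprod] at h1
    exact (mul_left_cancel₀ hUV h1).symm
  set cc : ℕ := (pairs m).card with hccdef
  set t : Fk (m+2) := (-1 : Fk (m+2)) ^ cc with htdef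
  set ZMF : Fk (m+2) := ∏ i, wF m i ^ M with hZdef
  have hZne : ZMF ≠ 0 := Finset.prod_ne_zero_iff.mpr fun i _ => pow_ne_zero _ (wF_ne_zero m i)
  have htne : t ≠ 0 := pow_ne_zero _ (neg_ne_zero.mpr one_ne_zero)
  have hterm : ∀ σ : Equiv.Perm (Fin (m+2)),
      (∏ i, wF m (σ i) ^ d i) *
        (∏ p ∈ pairs m, omegaF (q1F (m+2)) (q2F (m+2)) (wF m (σ p.1)) (wF m (σ p.2)))
      = (((Equiv.Perm.sign σ : ℤ) : Fk (m+2)) * ιF m (B m e σ)) *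
          (ZMF⁻¹ * (t * ιF m (vdmW m))⁻¹) := by
    intro σ
    have hsgn : ((Equiv.Perm.sign σ : ℤ) : Fk (m+2)) *
        ((Equiv.Perm.sign σ : ℤ) : Fk (m+2)) = 1 := by
      have h2 : ((Equiv.Perm.sign σ : ℤ) * (Equiv.Perm.sign σ : ℤ) : ℤ) = 1 := by
        rw [← Units.val_mul, Int.units_mul_self, Units.val_one]
      have h3 := congrArg (Int.cast : ℤ → Fk (m+2)) h2
      push_cast at h3
      exact h3
    have hC : (∏ i, wF m (σ i) ^ d i) = ιF m (∏ i, W m (σ i) ^ e i) * ZMF⁻¹ := by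
      have h1 : ∀ i : Fin (m+2), wF m (σ i) ^ d i
          = wF m (σ i) ^ e i * (wF m (σ i) ^ M)⁻¹ := by
        intro i
        rw [show d i = ((e i : ℤ)) - (M:ℤ) by rw [he i]; ring,
          zpow_sub₀ (wF_ne_zero m (σ i)), zpow_natCast, zpow_natCast, div_eq_mul_inv]
      calc (∏ i, wF m (σ i) ^ d i)
          = ∏ i, (wF m (σ i) ^ e i * (wF m (σ i) ^ M)⁻¹) :=
            Finset.prod_congr rfl fun i _ => h1 i
        _ = (∏ i, wF m (σ i) ^ e i) * ∏ i, (wF m (σ i) ^ M)⁻¹ := Finset.prod_mul_distrib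
        _ = (∏ i, wF m (σ i) ^ e i) * ∏ i, (wF m i ^ M)⁻¹ := by
            rw [Equiv.prod_comp σ (fun i => (wF m i ^ M)⁻¹)]
        _ = ιF m (∏ i, W m (σ i) ^ e i) * ZMF⁻¹ := by
            rw [map_prod, hZdef, ← Finset.prod_inv_distrib]
            congr 1
            exact Finset.prod_congr rfl fun i _ => by rw [map_pow, wF_eq]
    have hden : (∏ p ∈ pairs m, (wF m (σ p.1) - wF m (σ p.2)))
        = ((Equiv.Perm.sign σ : ℤ) : Fk (m+2)) * (t * ιF m (vdmW m)) := by
      calc ∏ p ∈ pairs m, (wF m (σ p.1) - wF m (σ p.2))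
          = ∏ p ∈ pairs m, (-1 : Fk (m+2)) * (wF m (σ p.2) - wF m (σ p.1)) :=
            Finset.prod_congr rfl fun p _ => by ring
        _ = t * ∏ p ∈ pairs m, (wF m (σ p.2) - wF m (σ p.1)) := by
            rw [Finset.prod_mul_distrib, Finset.prod_const]
        _ = t * ∏ i, ∏ j ∈ Ioi i, (wF m (σ j) - wF m (σ i)) := by
            rw [show (pairs m) = Finset.univ.filter
                (fun p : Fin (m+2) × Fin (m+2) => p.1 < p.2) from rfl,
              prod_pairs_eq (fun p : Fin (m+2) × Fin (m+2) => wF m (σ p.2) - wF m (σ p.1))]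
        _ = t * (((Equiv.Perm.sign σ : ℤ) : Fk (m+2)) *
              ∏ i, ∏ j ∈ Ioi i, (wF m j - wF m i)) := by
            rw [vdm_perm (wF m) σ]
        _ = ((Equiv.Perm.sign σ : ℤ) : Fk (m+2)) * (t * ιF m (vdmW m)) := by
            rw [vdmW, map_prod]
            have hprd : ∀ i : Fin (m+2), (∏ j ∈ Ioi i, (wF m j - wF m i))
                = ιF m (∏ j ∈ Ioi i, (W m j - W m i)) := fun i => by
              rw [map_prod]
              exact Finset.prod_congr rfl fun j _ => by rw [map_sub, wF_eq, wF_eq]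
            rw [Finset.prod_congr rfl (fun i _ => hprd i)]
            ring
    have hA : (∏ p ∈ pairs m, omegaF (q1F (m+2)) (q2F (m+2)) (wF m (σ p.1)) (wF m (σ p.2)))
        = ιF m (∏ p ∈ pairs m, Np m (W m (σ p.1)) (W m (σ p.2)))
            / (∏ p ∈ pairs m, (wF m (σ p.1) - wF m (σ p.2))) := by
      rw [map_prod, ← Finset.prod_div_distrib]
      refine Finset.prod_congr rfl fun p _ => ?_
      rw [omegaF]
      congr 1
      simp only [Np, map_mul, map_sub, ← wF_eq, ← hq1F, ← hq2F]
    rw [hC, hA, hden, B, map_mul, div_eq_mul_inv, mul_inv]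
    have hsinv : (((Equiv.Perm.sign σ : ℤ) : Fk (m+2)))⁻¹
        = ((Equiv.Perm.sign σ : ℤ) : Fk (m+2)) :=
      inv_eq_of_mul_eq_one_right hsgn
    rw [hsinv]
    ring
  have hSh : Sh (q1F (m+2)) (q2F (m+2)) (wF m) d
      = ιF m (P m e) * (ZMF⁻¹ * (t * ιF m (vdmW m))⁻¹) := by
    rw [Sh]
    rw [show (Finset.univ.filter (fun p : Fin (m+2) × Fin (m+2) => p.1 < p.2)) = pairs m
      from rfl]
    calc (∑ σ : Equiv.Perm (Fin (m+2)), (∏ i, wF m (σ i) ^ d i) *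
          ∏ p ∈ pairs m, omegaF (q1F (m+2)) (q2F (m+2)) (wF m (σ p.1)) (wF m (σ p.2)))
        = ∑ σ : Equiv.Perm (Fin (m+2)),
            (((Equiv.Perm.sign σ : ℤ) : Fk (m+2)) * ιF m (B m e σ)) *
              (ZMF⁻¹ * (t * ιF m (vdmW m))⁻¹) :=
          Finset.sum_congr rfl fun σ _ => hterm σ
      _ = (∑ σ : Equiv.Perm (Fin (m+2)),
            ((Equiv.Perm.sign σ : ℤ) : Fk (m+2)) * ιF m (B m e σ)) *
              (ZMF⁻¹ * (t * ιF m (vdmW m))⁻¹) := by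
          rw [← Finset.sum_mul]
      _ = ιF m (P m e) * (ZMF⁻¹ * (t * ιF m (vdmW m))⁻¹) := by
          congr 1
          rw [P, map_sum]
          exact Finset.sum_congr rfl fun σ _ => by rw [map_mul, sgn, map_intCast]
  have hvdmF : ιF m (vdmW m) = (-2 : Fk (m+2)) * ιF m (Vprod m) := by
    rw [vdmW_eq, map_mul]
    congr 1
    rw [map_neg, map_ofNat]
  have hVne : ιF m (Vprod m) ≠ 0 := (map_ne_zero_iff _ (ι_inj m)).mpr (Vprod_ne_zero m)
  have h2ne : (-2 : Fk (m+2)) ≠ 0 := by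
    intro h
    have h3 : ((-2 : A m)) = 0 := ι_inj m (by rw [map_neg, map_ofNat, h, map_zero])
    norm_num at h3
  refine ⟨ιF m (aeval (gpsi m) Qq) * (ZMF⁻¹ * (t * (-2 : Fk (m+2)))⁻¹), ?_, ?_⟩
  · refine Subring.mul_mem _ (mem_psi m Qq) (Subring.mul_mem _ ?_ ?_)
    · have hZinv : ZMF⁻¹ = ∏ i, ((wF m i)⁻¹) ^ M := by
        rw [hZdef, ← Finset.prod_inv_distrib]
        exact Finset.prod_congr rfl fun i _ => by rw [inv_pow]
      rw [hZinv]
      refine Subring.prod_mem _ fun i _ => Subring.pow_mem _ ?_ M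
      by_cases hi : i = 1
      · have hww : wF m i = -(zF (m+2) 0) := by rw [wF, if_pos hi]
        have hz0 : zF (m+2) 0 ≠ 0 := by
          have := wF_ne_zero m 0
          rwa [wF, if_neg (zero_ne_one_fin m)] at this
        have hinv : (-(zF (m+2) 0))⁻¹ = -((zF (m+2) 0)⁻¹) := by
          refine inv_eq_of_mul_eq_one_right ?_
          have h5 := mul_inv_cancel₀ hz0
          linear_combination h5
        rw [hww, hinv]
        exact Subring.neg_mem _ (mem_zinv m (zero_ne_one_fin m))
      · have hww : wF m i = zF (m+2) i := by rw [wF, if_neg hi]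
        rw [hww]
        exact mem_zinv m hi
    · rw [mul_inv]
      refine Subring.mul_mem _ ?_ ?_
      · have htt : t * t = 1 := by
          rw [htdef, ← mul_pow]
          norm_num
        rw [inv_eq_of_mul_eq_one_right htt, htdef]
        exact Subring.pow_mem _ (Subring.neg_mem _ (Subring.one_mem _)) cc
      · have h4 : (-2 : Fk (m+2))⁻¹ = algebraMap ℂ (Fk (m+2)) ((-2)⁻¹) := by
          rw [map_inv₀, map_neg, map_ofNat]
        rw [h4]
        exact mem_const m _
  · rw [hSh, hQq, map_mul, map_mul, hvdmF, ← hQψ]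
    have hUF : ιF m (U m) = (1 + q1F (m+2)) * (1 + q2F (m+2)) *
        (1 + q1F (m+2) * q2F (m+2)) := by
      rw [U]
      simp only [map_mul, map_add, map_one, ← hq1F, ← hq2F]
    rw [← hUF]
    field_simp

end ShAux

/-- Evaluation at `z2 = −z1`: for every `k ≥ 2` (written `k = m + 2`) and `d ∈ ℤ^k`, there is a
Laurent polynomial `c ∈ R[z1^{±1}, z3^{±1}, …, zk^{±1}]` with
`Sh_k(d)(z1, −z1, z3, …, zk) = (1 + q1)(1 + q2)(1 + q)·c`. -/
theorem sh_eval_neg_z1 (m : ℕ) (d : Fin (m + 2) → ℤ) :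
    ∃ c : Fk (m + 2),
      c ∈ Subring.closure
        ((Set.range fun cc : ℂ => algebraMap ℂ (Fk (m + 2)) cc) ∪
          {q1F (m + 2), (q1F (m + 2))⁻¹, q2F (m + 2), (q2F (m + 2))⁻¹} ∪
          (Set.range fun i : {i : Fin (m + 2) // i ≠ 1} => zF (m + 2) i.1) ∪
          (Set.range fun i : {i : Fin (m + 2) // i ≠ 1} => (zF (m + 2) i.1)⁻¹)) ∧
      Sh (q1F (m + 2)) (q2F (m + 2))
          (fun i => if i = 1 then -(zF (m + 2) 0) else zF (m + 2) i) d =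
        (1 + q1F (m + 2)) * (1 + q2F (m + 2)) * (1 + q1F (m + 2) * q2F (m + 2)) * c := by
  obtain ⟨c, hc, heq⟩ := ShAux.main m d
  exact ⟨c, hc, heq⟩

end
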